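/- If a matrix M in the n×n integer matrices is power-bounded, i.e., there exists N such that every entry of every power M^m (m ≥ 1) has absolute value less than N, and M is invertible over the integers, then M has finite order: M^m = I for some m ≥ 1. -/
import Mathlib


theorem power_bounded_unit_finite_order {n : ℕ} (M : Matrix (Fin n) (Fin n) ℤ)
    (hM : IsUnit M)
    (hbd : ∃ N : ℕ, ∀ m : ℕ, 1 ≤ m → ∀ i j : Fin n, |(M ^ m) i j| < (N : ℤ)) :
    ∃ m : ℕ, 1 ≤ m ∧ M ^ m = 1 := by
  obtain ⟨N, hN⟩ := hbd
  set T : Set (Matrix (Fin n) (Fin n) ℤ) :=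
    {A | ∀ i j, A i j ∈ Finset.Ioo (-(N:ℤ)) N} with hT
  have hfin : T.Finite := by
    have hsub : T ⊆ Set.pi Set.univ (fun _ : Fin n =>
        Set.pi Set.univ (fun _ : Fin n => (Finset.Ioo (-(N:ℤ)) N : Set ℤ))) := by
      intro A hA i _
      intro j _
      exact hA i j
    exact Set.Finite.subset (Set.Finite.pi (fun _ => Set.Finite.pi
      (fun _ => (Finset.Ioo (-(N:ℤ)) N).finite_toSet))) hsub
  have hmap : Set.MapsTo (fun m : ℕ => M ^ (m + 1)) Set.univ T := by
    intro m _ i j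
    have := hN (m + 1) (Nat.le_add_left 1 m) i j
    rw [abs_lt] at this
    simpa using this
  obtain ⟨a, -, b, -, hab, heq⟩ :=
    Set.infinite_univ.exists_ne_map_eq_of_mapsTo hmap hfin
  -- wlog a < b
  rcases hab.lt_or_gt with h | h
  · refine ⟨b - a, by omega, ?_⟩
    have hpow : M ^ (a + 1) * M ^ (b - a) = M ^ (a + 1) * 1 := by
      rw [mul_one, ← pow_add]
      have : a + 1 + (b - a) = b + 1 := by omega
      rw [this]
      exact heq.symm
    exact (hM.pow (a + 1)).mul_left_cancel hpow
  · refine ⟨a - b, by omega, ?_⟩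
    have hpow : M ^ (b + 1) * M ^ (a - b) = M ^ (b + 1) * 1 := by
      rw [mul_one, ← pow_add]
      have : b + 1 + (a - b) = a + 1 := by omega
      rw [this]
      exact heq
    exact (hM.pow (b + 1)).mul_left_cancel hpow
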